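/- Let Γ_M be the union of M ∪ M̄ and the axioms of the translated formula φ, and let Δ consist of atoms of the form R!(c̄). Then Γ_M, Δ ⊢ • is intuitionistically derivable iff there is an atom R!(c̄) ∈ Δ such that P̄ ∪ M̄ ⊢ R(c̄). -/

import Mathlib

namespace ASP

/-- A ground clause `head ← pos, ¬neg` of an answer set program. -/
structure GClause (α : Type) where
  head : α
  pos : List α
  neg : List α

variable {α : Type}

/-- Immediate-consequence operator of the Gelfond–Lifschitz reduct `P^M`:
`F(I) = I ∪ {a | some clause a ← a₁,…,aₙ of P^M has all aᵢ ∈ I}`. -/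
def tcons (P : Set (GClause α)) (M : Set α) : Set α →o Set α where
  toFun I := I ∪ {a | ∃ c ∈ P, c.head = a ∧ (∀ b ∈ c.pos, b ∈ I) ∧ (∀ b ∈ c.neg, b ∉ M)}
  monotone' := by
    intro I J h x hx
    rcases hx with hx | ⟨c, hc, h1, h2, h3⟩
    · exact Or.inl (h hx)
    · exact Or.inr ⟨c, hc, h1, fun b hb => h (h2 b hb), h3⟩

/-- The interpretation `I(P,M)`: least fixed point of the immediate-consequence
operator of the reduct `P^M`. -/
def interp (P : Set (GClause α)) (M : Set α) : Set α := OrderHom.lfp (tcons P M)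

/-- `M` is a stable model (answer set) of `P` iff `M = I(P,M)`. -/
def IsStable (P : Set (GClause α)) (M : Set α) : Prop := M = interp P M

end ASP
namespace ASP

/-- Formulas of minimal implicational propositional logic over atoms `α`. -/
inductive PForm (α : Type) where
  | at_ : α → PForm α
  | imp : PForm α → PForm α → PForm α

/-- Provability in minimal propositional logic (only → introduction/elimination). -/
inductive PPrv {α : Type} : Set (PForm α) → PForm α → Prop
  | ax {Γ : Set (PForm α)} {φ : PForm α} : φ ∈ Γ → PPrv Γ φ
  | impI {Γ : Set (PForm α)} {φ ψ : PForm α} : PPrv (insert φ Γ) ψ → PPrv Γ (.imp φ ψ)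
  | impE {Γ : Set (PForm α)} {φ ψ : PForm α} : PPrv Γ (.imp φ ψ) → PPrv Γ φ → PPrv Γ ψ

end ASP
namespace TR

/-- A ground atom `R(c̄)`: predicate index plus constant arguments. -/
structure GA where
  pred : ℕ
  args : List ℕ
deriving DecidableEq

/-- Atom alphabet of the translated formula φ: for every program predicate `R`
there are `R`, `R̄`, `R!`, `R?`; pair predicates `RP`; clause predicates `K⁰`
and nullary `K̄⁰`; and the nullary `•, ∘, A, B, ⊙`. -/
inductive At where
  | pos : GA → At
  | bar : GA → At
  | bang : GA → At
  | quest : GA → At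
  | mem : GA → GA → At
  | k : ℕ → List ℕ → At
  | kbar : ℕ → At
  | bullet : At
  | circ : At
  | unsound : At
  | incomplete : At
  | lup : At
deriving DecidableEq

abbrev F := ASP.PForm At

def av (a : At) : F := .at_ a

def imps (l : List F) (t : F) : F := l.foldr ASP.PForm.imp t

/-- Axioms (1): `(R(c̄)→⊙) → (R̄(c̄)→⊙) → ⊙`. -/
def ax1 (B : Set GA) : Set F :=
  {f | ∃ a ∈ B, f = .imp (.imp (av (.pos a)) (av .lup)) (.imp (.imp (av (.bar a)) (av .lup)) (av .lup))}

/-- Axioms (2): `Ω→⊙`, `A→⊙`, `B→⊙`. -/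
def ax2 (ω : GA) : Set F :=
  {.imp (av (.pos ω)) (av .lup), .imp (av .unsound) (av .lup), .imp (av .incomplete) (av .lup)}

/-- Axioms (3): `R̄(c̄) → (R!(c̄)→•) → A`. -/
def ax3 (B : Set GA) : Set F :=
  {f | ∃ a ∈ B, f = .imp (av (.bar a)) (.imp (.imp (av (.bang a)) (av .bullet)) (av .unsound))}

/-- Axioms (4): `R(c̄) → (R?(c̄)→∘) → B`. -/
def ax4 (B : Set GA) : Set F :=
  {f | ∃ a ∈ B, f = .imp (av (.pos a)) (.imp (.imp (av (.quest a)) (av .circ)) (av .incomplete))}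

/-- Axiom (5) for a ground clause `R(ē) ← P₁(c̄₁),…,P_r(c̄_r), ¬S₁(d̄₁),…,¬S_s(d̄_s)`:
`R!(ē) → (P₁!(c̄₁)→•) → ⋯ → (P_r!(c̄_r)→•) → S̄₁(d̄₁) → ⋯ → S̄_s(d̄_s) → •`. -/
def clax (c : ASP.GClause GA) : F :=
  .imp (av (.bang c.head))
    (imps (c.pos.map (fun b => .imp (av (.bang b)) (av .bullet)) ++
           c.neg.map (fun s => av (.bar s))) (av .bullet))

def ax5 (Pg : List (ASP.GClause GA)) : Set F := {f | ∃ c ∈ Pg, f = clax c}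

/-- Axioms (6): `R?(c̄) → (K⁰₁(c̄)→K̄⁰₁) → ⋯ → (K⁰_l(c̄)→K̄⁰_l) → ∘`,
where K₁,…,K_l are all clauses whose target predicate is that of the atom. -/
def ax6 (Pg : List (ASP.GClause GA)) (B : Set GA) : Set F :=
  {f | ∃ a ∈ B, f = .imp (av (.quest a))
    (imps (((Pg.zipIdx.map Prod.swap).filter (fun jc => jc.2.head.pred == a.pred)).map
      (fun jc => ASP.PForm.imp (av (.k jc.1 a.args)) (av (.kbar jc.1)))) (av .circ))}

/-- Axioms (7)-(8): a mismatch between the queried arguments and the clause head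
arguments immediately yields `K⁰(c̄) → K̄⁰`. -/
def ax7 (Pg : List (ASP.GClause GA)) (B : Set GA) : Set F :=
  {f | ∃ jc ∈ (Pg.zipIdx.map Prod.swap), ∃ a ∈ B, a.pred = jc.2.head.pred ∧ a.args ≠ jc.2.head.args ∧
    f = .imp (av (.k jc.1 a.args)) (av (.kbar jc.1))}

/-- Axioms (10): `K⁰(ē) → (P?(c̄) → RP(ē,c̄) → ∘) → K̄⁰`, for each positive body atom. -/
def ax10 (Pg : List (ASP.GClause GA)) : Set F :=
  {f | ∃ jc ∈ (Pg.zipIdx.map Prod.swap), ∃ b ∈ jc.2.pos, f = .imp (av (.k jc.1 jc.2.head.args))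
    (.imp (.imp (av (.quest b)) (.imp (av (.mem jc.2.head b)) (av .circ))) (av (.kbar jc.1)))}

/-- Axioms (11): `K⁰(ē) → S(d̄) → K̄⁰`, for each negative body atom `¬S(d̄)`. -/
def ax11 (Pg : List (ASP.GClause GA)) : Set F :=
  {f | ∃ jc ∈ (Pg.zipIdx.map Prod.swap), ∃ s ∈ jc.2.neg, f = .imp (av (.k jc.1 jc.2.head.args))
    (.imp (av (.pos s)) (av (.kbar jc.1)))}

/-- Axioms (12): transitivity `RP(ā,b̄) → PQ(b̄,c̄) → (RQ(ā,c̄)→∘) → ∘`. -/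
def ax12 (B : Set GA) : Set F :=
  {f | ∃ a ∈ B, ∃ b ∈ B, ∃ c ∈ B, f = .imp (av (.mem a b)) (.imp (av (.mem b c))
    (.imp (.imp (av (.mem a c)) (av .circ)) (av .circ)))}

/-- Axioms (13): loop detection `PP(ā,ā) → ∘`. -/
def ax13 (B : Set GA) : Set F := {f | ∃ a ∈ B, f = .imp (av (.mem a a)) (av .circ)}

/-- All axioms of the translated formula φ. -/
def Axioms (Pg : List (ASP.GClause GA)) (B : Set GA) (ω : GA) : Set F :=
  ax1 B ∪ ax2 ω ∪ ax3 B ∪ ax4 B ∪ ax5 Pg ∪ ax6 Pg B ∪ ax7 Pg B ∪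
    ax10 Pg ∪ ax11 Pg ∪ ax12 B ∪ ax13 B

/-- `Γ_M`: the union of `M ∪ M̄` with the axioms of φ. -/
def GammaM (Pg : List (ASP.GClause GA)) (B : Set GA) (ω : GA) (M : Set GA) : Set F :=
  Axioms Pg B ω ∪ {f | ∃ a ∈ M, f = av (.pos a)} ∪ {f | ∃ a ∈ B, a ∉ M ∧ f = av (.bar a)}

/-- The implicational formula of a clause of `P̄` (negative atoms replaced by barred ones). -/
def cbarF (c : ASP.GClause GA) : F :=
  imps (c.pos.map (fun b => av (.pos b)) ++ c.neg.map (fun s => av (.bar s))) (av (.pos c.head))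

/-- The environment `P̄ ∪ M̄`. -/
def PbarMbar (Pg : List (ASP.GClause GA)) (B : Set GA) (M : Set GA) : Set F :=
  {f | ∃ c ∈ Pg, f = cbarF c} ∪ {f | ∃ a ∈ B, a ∉ M ∧ f = av (.bar a)}

def progSet (Pg : List (ASP.GClause GA)) : Set (ASP.GClause GA) := {c | c ∈ Pg}

/-- All atoms of the program lie in the Herbrand base `B`. -/
def WfProg (Pg : List (ASP.GClause GA)) (B : Set GA) : Prop :=
  ∀ c ∈ Pg, c.head ∈ B ∧ (∀ b ∈ c.pos, b ∈ B) ∧ (∀ s ∈ c.neg, s ∈ B)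

end TR

namespace Aux
open ASP TR

/-- Weakening for minimal provability. -/
theorem weaken {β : Type} {Γ Γ' : Set (PForm β)} {f : PForm β} (h : PPrv Γ f)
    (hs : Γ ⊆ Γ') : PPrv Γ' f := by
  induction h generalizing Γ' with
  | ax h => exact .ax (hs h)
  | impI h ih => exact .impI (ih (Set.insert_subset_insert hs))
  | impE h1 h2 ih1 ih2 => exact .impE (ih1 hs) (ih2 hs)

/-- Semantic valuation. -/
def val (v : At → Prop) : F → Prop
  | .at_ a => v a
  | .imp f g => val v f → val v g

theorem sound {v : At → Prop} : ∀ {Γ : Set F} {f : F}, PPrv Γ f →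
    (∀ g ∈ Γ, val v g) → val v f := by
  intro Γ f h
  induction h with
  | ax h => exact fun hΓ => hΓ _ h
  | impI h ih =>
    intro hΓ hφ
    exact ih (by
      intro g hg
      rcases Set.mem_insert_iff.mp hg with rfl | hg
      · exact hφ
      · exact hΓ g hg)
  | impE h1 h2 ih1 ih2 => exact fun hΓ => (ih1 hΓ) (ih2 hΓ)

theorem val_imps {v : At → Prop} {l : List F} {t : F} :
    val v (imps l t) ↔ ((∀ f ∈ l, val v f) → val v t) := by
  induction l with
  | nil => simp [imps, val]
  | cons f l ih =>
    show (val v f → val v (imps l t)) ↔ _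
    constructor
    · intro h hl
      exact ih.mp (h (hl f (by simp))) fun g hg => hl g (by simp [hg])
    · intro h hf
      exact ih.mpr fun hl => h (by
        intro g hg
        rcases List.mem_cons.mp hg with rfl | hg
        · exact hf
        · exact hl g hg)

theorem imps_elim {Γ : Set F} {l : List F} {t : F} (h : PPrv Γ (imps l t))
    (hl : ∀ f ∈ l, PPrv Γ f) : PPrv Γ t := by
  induction l with
  | nil => exact h
  | cons f l ih => exact ih (.impE h (hl f (by simp))) fun g hg => hl g (by simp [hg])

/-- Derivability of an atom from `P̄ ∪ M̄`, inductively. -/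
inductive D (Pg : List (ASP.GClause GA)) (B : Set GA) (M : Set GA) : GA → Prop
  | mk {c : ASP.GClause GA} : c ∈ Pg → (∀ b ∈ c.pos, D Pg B M b) →
      (∀ s ∈ c.neg, s ∈ B ∧ s ∉ M) → D Pg B M c.head

theorem D_prv {Pg : List (ASP.GClause GA)} {B M : Set GA} {a : GA}
    (h : D Pg B M a) : PPrv (PbarMbar Pg B M) (av (.pos a)) := by
  induction h with
  | @mk c hc hpos hneg ih =>
    have hcl : PPrv (PbarMbar Pg B M) (cbarF c) := .ax (Or.inl ⟨c, hc, rfl⟩)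
    refine imps_elim hcl ?_
    intro f hf
    rcases List.mem_append.mp hf with hf | hf
    · rcases List.mem_map.mp hf with ⟨b, hb, rfl⟩
      exact ih b hb
    · rcases List.mem_map.mp hf with ⟨s, hs, rfl⟩
      exact .ax (Or.inr ⟨s, (hneg s hs).1, (hneg s hs).2, rfl⟩)

def v2 (Pg : List (ASP.GClause GA)) (B M : Set GA) : At → Prop
  | .pos a => D Pg B M a
  | .bar a => a ∈ B ∧ a ∉ M
  | _ => True

theorem prv_D {Pg : List (ASP.GClause GA)} {B M : Set GA} {a : GA}
    (h : PPrv (PbarMbar Pg B M) (av (.pos a))) : D Pg B M a := by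
  have : val (v2 Pg B M) (av (.pos a)) := by
    refine sound h ?_
    rintro g (⟨c, hc, rfl⟩ | ⟨b, hbB, hbM, rfl⟩)
    · show val (v2 Pg B M) (imps _ _)
      refine val_imps.mpr fun hl => ?_
      show D Pg B M c.head
      refine D.mk hc (fun b hb => ?_) (fun s hs => ?_)
      · exact hl (av (.pos b)) (List.mem_append.mpr (Or.inl (List.mem_map.mpr ⟨b, hb, rfl⟩)))
      · exact hl (av (.bar s)) (List.mem_append.mpr (Or.inr (List.mem_map.mpr ⟨s, hs, rfl⟩)))
    · exact ⟨hbB, hbM⟩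
  exact this

theorem D_bang {Pg : List (ASP.GClause GA)} {B : Set GA} {ω : GA} {M Δ : Set GA} {a : GA} (h : D Pg B M a) :
    PPrv (TR.GammaM Pg B ω M ∪ {f | ∃ a ∈ Δ, f = TR.av (.bang a)})
      (.imp (av (.bang a)) (av .bullet)) := by
  induction h with
  | @mk c hc hpos hneg ih =>
    apply PPrv.impI
    set Γ' := insert (av (At.bang c.head))
      (TR.GammaM Pg B ω M ∪ {f | ∃ a ∈ Δ, f = TR.av (.bang a)}) with hΓ'
    have hcl : PPrv Γ' (clax c) := by
      refine .ax (Set.mem_insert_of_mem _ (Or.inl (Or.inl (Or.inl ?_))))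
      exact Or.inl (Or.inl (Or.inl (Or.inl (Or.inl (Or.inl (Or.inr ⟨c, hc, rfl⟩))))))
    have h1 : PPrv Γ' (imps (c.pos.map (fun b => .imp (av (.bang b)) (av .bullet)) ++
        c.neg.map (fun s => av (.bar s))) (av .bullet)) :=
      .impE hcl (.ax (Set.mem_insert _ _))
    refine imps_elim h1 ?_
    intro f hf
    rcases List.mem_append.mp hf with hf | hf
    · rcases List.mem_map.mp hf with ⟨b, hb, rfl⟩
      exact weaken (ih b hb) (Set.subset_insert _ _)
    · rcases List.mem_map.mp hf with ⟨s, hs, rfl⟩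
      exact .ax (Set.mem_insert_of_mem _
        (Or.inl (Or.inr ⟨s, (hneg s hs).1, (hneg s hs).2, rfl⟩)))

def v1 (Pg : List (ASP.GClause GA)) (B M Δ : Set GA) : At → Prop
  | .pos a => a ∈ M
  | .bar a => a ∈ B ∧ a ∉ M
  | .bang a => D Pg B M a → ∃ b ∈ Δ, D Pg B M b
  | .bullet => ∃ b ∈ Δ, D Pg B M b
  | _ => True

theorem valid1 {Pg : List (ASP.GClause GA)} {B : Set GA} {ω : GA} {M Δ : Set GA} :
    ∀ g ∈ TR.GammaM Pg B ω M ∪ {f | ∃ a ∈ Δ, f = TR.av (.bang a)},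
      val (v1 Pg B M Δ) g := by
  rintro g (((hg | ⟨a, haM, rfl⟩) | ⟨a, haB, haM, rfl⟩) | ⟨a, haΔ, rfl⟩)
  · rcases hg with ((((((((((hg|hg)|hg)|hg)|hg)|hg)|hg)|hg)|hg)|hg)|hg)
    · obtain ⟨a, _, rfl⟩ := hg; exact fun _ _ => trivial
    · rcases hg with rfl | rfl | rfl
      · exact fun _ => trivial
      · exact fun _ => trivial
      · exact fun _ => trivial
    · obtain ⟨a, _, rfl⟩ := hg; exact fun _ _ => trivial
    · obtain ⟨a, _, rfl⟩ := hg; exact fun _ _ => trivial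
    · -- ax5 : clax
      obtain ⟨c, hc, rfl⟩ := hg
      intro h1
      refine val_imps.mpr fun hl => ?_
      show ∃ b ∈ Δ, D Pg B M b
      by_cases hE : ∃ b ∈ Δ, D Pg B M b
      · exact hE
      · exfalso
        have hD : ∀ b ∈ c.pos, D Pg B M b := by
          intro b hb
          have hb' := hl (.imp (av (.bang b)) (av .bullet))
            (List.mem_append.mpr (Or.inl (List.mem_map.mpr ⟨b, hb, rfl⟩)))
          by_contra hnb
          exact hE (hb' fun hdb => absurd hdb hnb)
        have hN : ∀ s ∈ c.neg, s ∈ B ∧ s ∉ M := fun s hs =>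
          hl (av (.bar s)) (List.mem_append.mpr (Or.inr (List.mem_map.mpr ⟨s, hs, rfl⟩)))
        exact hE (h1 (D.mk hc hD hN))
    · obtain ⟨a, _, rfl⟩ := hg
      exact fun _ => val_imps.mpr fun _ => trivial
    · obtain ⟨jc, _, a, _, _, _, rfl⟩ := hg; exact fun _ => trivial
    · obtain ⟨jc, _, b, _, rfl⟩ := hg; exact fun _ _ => trivial
    · obtain ⟨jc, _, s, _, rfl⟩ := hg; exact fun _ _ => trivial
    · obtain ⟨a, _, b, _, c, _, rfl⟩ := hg; exact fun _ _ _ => trivial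
    · obtain ⟨a, _, rfl⟩ := hg; exact fun _ => trivial
  · exact haM
  · exact ⟨haB, haM⟩
  · exact fun h => ⟨a, haΔ, h⟩

end Aux

/-- With Δ a set of assumptions of the form `R!(c̄)`:
`Γ_M, Δ ⊢ •` iff some `R!(c̄) ∈ Δ` satisfies `P̄ ∪ M̄ ⊢ R(c̄)`. -/
theorem stmt7 (Pg : List (ASP.GClause TR.GA)) (B : Set TR.GA) (ω : TR.GA)
    (M Δ : Set TR.GA) (hW : TR.WfProg Pg B) (hM : M ⊆ B) (hΔ : Δ ⊆ B) :
    ASP.PPrv (TR.GammaM Pg B ω M ∪ {f | ∃ a ∈ Δ, f = TR.av (.bang a)})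
        (TR.av .bullet) ↔
      ∃ a ∈ Δ, ASP.PPrv (TR.PbarMbar Pg B M) (TR.av (.pos a)) := by
  constructor
  · intro h
    have hv : Aux.val (Aux.v1 Pg B M Δ) (TR.av TR.At.bullet) := Aux.sound h Aux.valid1
    obtain ⟨a, haΔ, hD⟩ := hv
    exact ⟨a, haΔ, Aux.D_prv hD⟩
  · rintro ⟨a, haΔ, hprv⟩
    have hD : Aux.D Pg B M a := Aux.prv_D hprv
    exact .impE (Aux.D_bang hD) (.ax (Or.inr ⟨a, haΔ, rfl⟩))
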